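/- Let n, m ∈ ℕ, let U* ⊆ ℝ^m be nonempty, let f : ℝ^n × ℝ^m → ℝ^n, let V : ℝ^n → ℝ be nonnegative, let α > 0, ε ≥ 0, χ ≥ 0, η ≥ 0 and x̂ ∈ ℝ^n. Let y ∈ ℝ^n be an ε-minimizer of the inf-convolution infimum at x̂, let ỹ ∈ ℝ^n satisfy ‖ỹ − y‖ ≤ χ, and set ζ̃ := (x̂ − ỹ)/α². Suppose L_f ≥ 0 is such that ‖f(x̂, u) − f(ỹ, u)‖ ≤ L_f ‖x̂ − ỹ‖ for all u ∈ U*, and suppose the control action κ ∈ U* satisfies ⟨ζ̃, f(ỹ, κ)⟩ ≤ inf_{u ∈ U*} ⟨ζ̃, f(ỹ, u)⟩ + η. Then ⟨ζ̃, f(x̂, κ)⟩ ≤ inf_{u ∈ U*} ⟨ζ̃, f(ỹ, u)⟩ + η + L_f · (2/α²) ( χ² + 2α² ( V(x̂) − V(y) + ε ) ). -/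

import Mathlib

open scoped RealInnerProductSpace

/-- Inf-convolution (Moreau–Yosida regularization) of `V` with parameter `α`. -/
noncomputable def infConv {n : ℕ} (V : EuclideanSpace ℝ (Fin n) → ℝ) (α : ℝ)
    (x : EuclideanSpace ℝ (Fin n)) : ℝ :=
  ⨅ y : EuclideanSpace ℝ (Fin n), (V y + ‖y - x‖ ^ 2 / (2 * α ^ 2))

/-- `y` is an `ε`-minimizer of the inf-convolution infimum at `x`. -/
def IsEpsMinimizer {n : ℕ} (V : EuclideanSpace ℝ (Fin n) → ℝ) (α ε : ℝ)
    (x y : EuclideanSpace ℝ (Fin n)) : Prop :=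
  V y + ‖y - x‖ ^ 2 / (2 * α ^ 2) ≤ infConv V α x + ε

theorem stmt9 (n m : ℕ) (Ustar : Set (EuclideanSpace ℝ (Fin m))) (hUne : Ustar.Nonempty)
    (f : EuclideanSpace ℝ (Fin n) → EuclideanSpace ℝ (Fin m) → EuclideanSpace ℝ (Fin n))
    (V : EuclideanSpace ℝ (Fin n) → ℝ) (hVnn : ∀ z, 0 ≤ V z)
    (α ε χ η : ℝ) (hα : 0 < α) (hε : 0 ≤ ε) (hχ : 0 ≤ χ) (hη : 0 ≤ η)
    (xhat y ytil : EuclideanSpace ℝ (Fin n))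
    (hy : IsEpsMinimizer V α ε xhat y) (hytil : ‖ytil - y‖ ≤ χ)
    (L_f : ℝ) (hLf : 0 ≤ L_f)
    (hfLip : ∀ u ∈ Ustar, ‖f xhat u - f ytil u‖ ≤ L_f * ‖xhat - ytil‖)
    (κ : EuclideanSpace ℝ (Fin m)) (hκ : κ ∈ Ustar)
    (hκopt : ⟪(α ^ 2)⁻¹ • (xhat - ytil), f ytil κ⟫ ≤
      sInf ((fun u => ⟪(α ^ 2)⁻¹ • (xhat - ytil), f ytil u⟫) '' Ustar) + η) :
    ⟪(α ^ 2)⁻¹ • (xhat - ytil), f xhat κ⟫ ≤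
      sInf ((fun u => ⟪(α ^ 2)⁻¹ • (xhat - ytil), f ytil u⟫) '' Ustar) + η
        + L_f * ((2 / α ^ 2) * (χ ^ 2 + 2 * α ^ 2 * (V xhat - V y + ε))) := by
  have hα2 : (0:ℝ) < α ^ 2 := by positivity
  have hinf : infConv V α xhat ≤ V xhat := by
    have h := ciInf_le (f := fun z => V z + ‖z - xhat‖ ^ 2 / (2 * α ^ 2))
      ⟨0, by rintro _ ⟨z, rfl⟩; exact add_nonneg (hVnn z) (by positivity)⟩ xhat
    simpa [infConv] using h
  have h1 : ‖y - xhat‖ ^ 2 ≤ 2 * α ^ 2 * (V xhat - V y + ε) := by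
    have hy' := hy
    unfold IsEpsMinimizer at hy'
    have h2 : ‖y - xhat‖ ^ 2 / (2 * α ^ 2) ≤ V xhat - V y + ε := by linarith
    have := mul_le_mul_of_nonneg_left h2 (le_of_lt (by positivity : (0:ℝ) < 2 * α ^ 2))
    calc ‖y - xhat‖ ^ 2 = 2 * α ^ 2 * (‖y - xhat‖ ^ 2 / (2 * α ^ 2)) := by field_simp
      _ ≤ 2 * α ^ 2 * (V xhat - V y + ε) := this
  have htri : ‖xhat - ytil‖ ≤ ‖xhat - y‖ + ‖y - ytil‖ :=
    norm_sub_le_norm_sub_add_norm_sub xhat y ytil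
  have hyx : ‖xhat - y‖ = ‖y - xhat‖ := norm_sub_rev _ _
  have hyt : ‖y - ytil‖ = ‖ytil - y‖ := norm_sub_rev _ _
  have h3 : ‖xhat - ytil‖ ^ 2 ≤ 2 * (χ ^ 2 + 2 * α ^ 2 * (V xhat - V y + ε)) := by
    nlinarith [norm_nonneg (xhat - ytil), norm_nonneg (xhat - y), norm_nonneg (y - ytil),
      sq_nonneg (‖xhat - y‖ - ‖y - ytil‖)]
  set ζ := (α ^ 2)⁻¹ • (xhat - ytil) with hζ
  have hsplit : ⟪ζ, f xhat κ⟫ = ⟪ζ, f ytil κ⟫ + ⟪ζ, f xhat κ - f ytil κ⟫ := by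
    rw [inner_sub_right]; ring
  have hnζ : ‖ζ‖ = (α ^ 2)⁻¹ * ‖xhat - ytil‖ := by
    rw [hζ, norm_smul]; simp [abs_of_pos (inv_pos.mpr hα2)]
  have hcs : ⟪ζ, f xhat κ - f ytil κ⟫ ≤ ‖ζ‖ * ‖f xhat κ - f ytil κ‖ :=
    real_inner_le_norm _ _
  have hlip := hfLip κ hκ
  have hbd : ⟪ζ, f xhat κ - f ytil κ⟫ ≤
      L_f * ((2 / α ^ 2) * (χ ^ 2 + 2 * α ^ 2 * (V xhat - V y + ε))) := by
    have h5 : ‖ζ‖ * ‖f xhat κ - f ytil κ‖ ≤ (α ^ 2)⁻¹ * ‖xhat - ytil‖ * (L_f * ‖xhat - ytil‖) := by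
      rw [hnζ]
      exact mul_le_mul_of_nonneg_left hlip (by positivity)
    have h6 : (α ^ 2)⁻¹ * ‖xhat - ytil‖ * (L_f * ‖xhat - ytil‖)
        = L_f * ((α ^ 2)⁻¹ * ‖xhat - ytil‖ ^ 2) := by ring
    have h7 : L_f * ((α ^ 2)⁻¹ * ‖xhat - ytil‖ ^ 2)
        ≤ L_f * ((2 / α ^ 2) * (χ ^ 2 + 2 * α ^ 2 * (V xhat - V y + ε))) := by
      apply mul_le_mul_of_nonneg_left _ hLf
      rw [div_eq_mul_inv, mul_comm (2:ℝ)]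
      calc (α ^ 2)⁻¹ * ‖xhat - ytil‖ ^ 2
          ≤ (α ^ 2)⁻¹ * (2 * (χ ^ 2 + 2 * α ^ 2 * (V xhat - V y + ε))) :=
            mul_le_mul_of_nonneg_left h3 (by positivity)
        _ = (α ^ 2)⁻¹ * 2 * (χ ^ 2 + 2 * α ^ 2 * (V xhat - V y + ε)) := by ring
    linarith [hcs]
  linarith [hsplit, hκopt, hbd]
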